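/- Let R be a discrete valuation ring with uniformiser ϖ and fraction field K, and let M and L be R-lattices in K². If (e₀, e₁) and (e₀', e₁') are R-bases of M and f, f' : Fin 2 → ℤ are antitone functions such that (ϖ^{f 0}·e₀, ϖ^{f 1}·e₁) and (ϖ^{f' 0}·e₀', ϖ^{f' 1}·e₁') are both R-bases of L, then f = f'. In particular the pair of integers (f 0, f 1) depends only on M and L. -/

import Mathlib

/-- An `R`-lattice in `K²`: an `R`-submodule of `K²` that is finitely generated over `R`
and spans `K²` as a `K`-vector space. -/
structure BTLattice (R : Type*) [CommRing R] (K : Type*) [Field K] [Algebra R K] where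
  /-- the underlying submodule -/
  toSubmodule : Submodule R (Fin 2 → K)
  fg : toSubmodule.FG
  spans : Submodule.span K (toSubmodule : Set (Fin 2 → K)) = ⊤

/-- The indexed family `b` is an `R`-basis of the submodule `M`: it is `R`-linearly
independent and its `R`-span is `M`. -/
structure IsBasisOn (R : Type*) [CommRing R] {V : Type*} [AddCommGroup V] [Module R V]
    {ι : Type*} (b : ι → V) (M : Submodule R V) : Prop where
  linearIndependent : LinearIndependent R b
  span_range_eq : Submodule.span R (Set.range b) = M

section aux
variable {R : Type*} [CommRing R] [IsDomain R] {K : Type*} [Field K]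
    [Algebra R K] [IsFractionRing R K]

lemma zpow_in_range_nonneg (ϖ : R) (hϖ : Irreducible ϖ) {m : ℤ} (a : R)
    (ha : algebraMap R K a = (algebraMap R K ϖ) ^ m) : 0 ≤ m := by
  by_contra h
  push_neg at h
  set π := algebraMap R K ϖ with hπ
  have hπ0 : π ≠ 0 := by
    simpa [hπ, map_eq_zero_iff _ (IsFractionRing.injective R K)] using hϖ.ne_zero
  have hn : (0:ℤ) < -m := by omega
  have hmn : π ^ m * π ^ (-m) = 1 := by
    rw [← zpow_add₀ hπ0]; simp
  have h2 : π ^ (-m) = algebraMap R K (ϖ ^ (-m).toNat) := by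
    rw [map_pow, ← hπ, ← zpow_natCast, Int.toNat_of_nonneg (by omega)]
  have h3 : algebraMap R K (a * ϖ ^ (-m).toNat) = algebraMap R K 1 := by
    rw [map_mul, ha, map_one, ← h2, hmn]
  have h4 : a * ϖ ^ (-m).toNat = 1 := IsFractionRing.injective R K h3
  have : IsUnit ϖ := by
    obtain ⟨n, hn2⟩ : ∃ n, (-m).toNat = n + 1 := ⟨(-m).toNat - 1, by omega⟩
    refine IsUnit.of_mul_eq_one (a := ϖ) (ϖ ^ n * a) ?_
    rw [← h4, hn2, pow_succ]; ring
  exact hϖ.not_isUnit this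

lemma key_char (ϖ : R) (hϖ : Irreducible ϖ) (M L : BTLattice R K)
    (e : Fin 2 → (Fin 2 → K)) (he : IsBasisOn R e M.toSubmodule)
    (f : Fin 2 → ℤ) (hf : Antitone f)
    (hL : IsBasisOn R (fun i => (algebraMap R K ϖ) ^ (f i) • e i) L.toSubmodule) :
    (∀ k : ℤ, (∀ x ∈ L.toSubmodule, (algebraMap R K ϖ) ^ (-k) • x ∈ M.toSubmodule) ↔ k ≤ f 1) ∧
    (∀ k : ℤ, (∀ x ∈ M.toSubmodule, (algebraMap R K ϖ) ^ k • x ∈ L.toSubmodule) ↔ f 0 ≤ k) := by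
  set π := algebraMap R K ϖ with hπ
  have hπ0 : π ≠ 0 := by
    simpa [hπ, map_eq_zero_iff _ (IsFractionRing.injective R K)] using hϖ.ne_zero
  -- e is K-linearly independent
  have htop : ⊤ ≤ Submodule.span K (Set.range e) := by
    rw [← M.spans]
    refine Submodule.span_le.mpr ?_
    intro x hx
    have : M.toSubmodule ≤ (Submodule.span K (Set.range e)).restrictScalars R := by
      rw [← he.span_range_eq]
      exact Submodule.span_le.mpr Submodule.subset_span
    exact this hx
  have heK : LinearIndependent K e :=
    linearIndependent_of_top_le_span_of_card_eq_finrank htop (by simp)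
  have hind := Fintype.linearIndependent_iff.mp heK
  -- membership helpers
  have hmemM : ∀ (i : Fin 2) (m : ℤ), 0 ≤ m → π ^ m • e i ∈ M.toSubmodule := by
    intro i m hm
    lift m to ℕ using hm
    rw [zpow_natCast, ← map_pow, algebraMap_smul]
    exact Submodule.smul_mem _ _
      (he.span_range_eq ▸ Submodule.subset_span (Set.mem_range_self i))
  have hmemL : ∀ (i : Fin 2) (m : ℤ), 0 ≤ m → π ^ (m + f i) • e i ∈ L.toSubmodule := by
    intro i m hm
    have : π ^ (m + f i) • e i = π ^ m • (π ^ f i • e i) := by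
      rw [smul_smul, ← zpow_add₀ hπ0]
    rw [this]
    lift m to ℕ using hm
    rw [zpow_natCast, ← map_pow, algebraMap_smul]
    exact Submodule.smul_mem _ _
      (hL.span_range_eq ▸ Submodule.subset_span (Set.mem_range_self i))
  constructor
  · intro k
    constructor
    · intro h
      have hx : π ^ (f 1) • e 1 ∈ L.toSubmodule :=
        hL.span_range_eq ▸ Submodule.subset_span (Set.mem_range_self 1)
      have h1 : π ^ (-k) • π ^ (f 1) • e 1 ∈ M.toSubmodule := h _ hx
      have h2 : π ^ (f 1 - k) • e 1 ∈ Submodule.span R (Set.range e) := by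
        rw [he.span_range_eq]
        have : π ^ (f 1 - k) • e 1 = π ^ (-k) • π ^ (f 1) • e 1 := by
          rw [smul_smul, ← zpow_add₀ hπ0, neg_add_eq_sub]
        rw [this]; exact h1
      obtain ⟨c, hc⟩ := (Submodule.mem_span_range_iff_exists_fun R).mp h2
      have hsum : ∑ i, (![algebraMap R K (c 0), algebraMap R K (c 1) - π ^ (f 1 - k)] i) • e i
          = 0 := by
        rw [Fin.sum_univ_two]
        simp only [Matrix.cons_val_zero, Matrix.cons_val_one, Matrix.head_cons]
        have hc2 : algebraMap R K (c 0) • e 0 + algebraMap R K (c 1) • e 1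
            = π ^ (f 1 - k) • e 1 := by
          rw [algebraMap_smul, algebraMap_smul, ← Fin.sum_univ_two (fun i => c i • e i)]
          exact hc
        rw [sub_smul, ← hc2]; abel
      have := hind _ hsum 1
      simp only [Matrix.cons_val_one, Matrix.head_cons, Matrix.cons_val_zero, sub_eq_zero] at this
      have := zpow_in_range_nonneg (K := K) ϖ hϖ (c 1) this
      omega
    · intro hk x hx
      rw [← hL.span_range_eq] at hx
      obtain ⟨c, hc⟩ := (Submodule.mem_span_range_iff_exists_fun R).mp hx
      rw [← hc, Fin.sum_univ_two, smul_add]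
      refine Submodule.add_mem _ ?_ ?_
      all_goals
        rw [smul_comm]
        refine Submodule.smul_mem _ _ ?_
        rw [smul_smul, ← zpow_add₀ hπ0, neg_add_eq_sub]
      · exact hmemM 0 _ (by have := hf (by norm_num : (0:Fin 2) ≤ 1); omega)
      · exact hmemM 1 _ (by omega)
  · intro k
    constructor
    · intro h
      have hx : e 0 ∈ M.toSubmodule :=
        he.span_range_eq ▸ Submodule.subset_span (Set.mem_range_self 0)
      have h1 : π ^ k • e 0 ∈ L.toSubmodule := h _ hx
      rw [← hL.span_range_eq] at h1
      obtain ⟨c, hc⟩ := (Submodule.mem_span_range_iff_exists_fun R).mp h1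
      have hsum : ∑ i, (![algebraMap R K (c 0) * π ^ (f 0) - π ^ k,
          algebraMap R K (c 1) * π ^ (f 1)] i) • e i = 0 := by
        rw [Fin.sum_univ_two]
        simp only [Matrix.cons_val_zero, Matrix.cons_val_one, Matrix.head_cons]
        have hc2 : (algebraMap R K (c 0) * π ^ f 0) • e 0
            + (algebraMap R K (c 1) * π ^ f 1) • e 1 = π ^ k • e 0 := by
          rw [← smul_smul, ← smul_smul, algebraMap_smul, algebraMap_smul,
            ← Fin.sum_univ_two (fun i => c i • (π ^ f i • e i))]
          exact hc
        rw [sub_smul, ← hc2]; abel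
      have := hind _ hsum 0
      simp only [Matrix.cons_val_zero, sub_eq_zero] at this
      have h2 : algebraMap R K (c 0) = π ^ (k - f 0) := by
        rw [zpow_sub₀ hπ0, ← this, mul_div_assoc, div_self (zpow_ne_zero _ hπ0), mul_one]
      have := zpow_in_range_nonneg (K := K) ϖ hϖ (c 0) h2
      omega
    · intro hk x hx
      rw [← he.span_range_eq] at hx
      obtain ⟨c, hc⟩ := (Submodule.mem_span_range_iff_exists_fun R).mp hx
      rw [← hc, Fin.sum_univ_two, smul_add]
      refine Submodule.add_mem _ ?_ ?_
      all_goals rw [smul_comm]; refine Submodule.smul_mem _ _ ?_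
      · have : k = (k - f 0) + f 0 := by omega
        rw [this]; exact hmemL 0 _ (by omega)
      · have : k = (k - f 1) + f 1 := by omega
        rw [this]
        exact hmemL 1 _ (by have := hf (by norm_num : (0:Fin 2) ≤ 1); omega)

end aux

/-- Let `R` be a discrete valuation ring with uniformiser `ϖ` and fraction
field `K`, and `M`, `L` two `R`-lattices in `K²`. If `e` and `e'` are `R`-bases of `M` and
`f, f' : Fin 2 → ℤ` are antitone functions such that `(ϖ ^ f 0 • e 0, ϖ ^ f 1 • e 1)` and
`(ϖ ^ f' 0 • e' 0, ϖ ^ f' 1 • e' 1)` are both `R`-bases of `L`, then `f = f'`. -/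
theorem normal_basis_exponents_unique {R : Type*} [CommRing R] [IsDomain R]
    [IsDiscreteValuationRing R] {K : Type*} [Field K] [Algebra R K] [IsFractionRing R K]
    (ϖ : R) (hϖ : Irreducible ϖ) (M L : BTLattice R K)
    (e e' : Fin 2 → (Fin 2 → K))
    (he : IsBasisOn R e M.toSubmodule) (he' : IsBasisOn R e' M.toSubmodule)
    (f f' : Fin 2 → ℤ) (hf : Antitone f) (hf' : Antitone f')
    (hL : IsBasisOn R (fun i => (algebraMap R K ϖ) ^ (f i) • e i) L.toSubmodule)
    (hL' : IsBasisOn R (fun i => (algebraMap R K ϖ) ^ (f' i) • e' i) L.toSubmodule) :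
    f = f' := by
  obtain ⟨P, Q⟩ := key_char ϖ hϖ M L e he f hf hL
  obtain ⟨P', Q'⟩ := key_char ϖ hϖ M L e' he' f' hf' hL'
  have h1 : f 1 = f' 1 :=
    le_antisymm ((P' (f 1)).mp ((P (f 1)).mpr le_rfl))
      ((P (f' 1)).mp ((P' (f' 1)).mpr le_rfl))
  have h0 : f 0 = f' 0 :=
    le_antisymm ((Q (f' 0)).mp ((Q' (f' 0)).mpr le_rfl))
      ((Q' (f 0)).mp ((Q (f 0)).mpr le_rfl))
  funext i
  fin_cases i <;> assumption
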